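/- arXiv:math/0110118 — 2 statements merged into one kernel-verified Lean document; each statement's English description precedes it below -/
import Mathlib

section
/- If (f_n) are measurable on ℝ² and |f| ≤ liminf_n |f_n| a.e., then f₂* ≤ liminf_n (f_n)₂* pointwise on ℝ₊². In particular, if |f_n| increases to |f| pointwise, then (f_n)₂* increases to f₂*. -/
open MeasureTheory Set ENNReal Filter

/-- Classical decreasing rearrangement of an `ℝ≥0∞`-valued function. -/
noncomputable def decRe {α : Type*} [MeasurableSpace α] (μ : Measure α)
    (g : α → ℝ≥0∞) (t : ℝ) : ℝ≥0∞ :=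
  sInf {l : ℝ≥0∞ | μ {x | l < g x} ≤ ENNReal.ofReal t}

/-- `φ_E(x)`: the measure of the `x`-section of `E`. -/
noncomputable def phiSec (E : Set (ℝ × ℝ)) (x : ℝ) : ℝ≥0∞ :=
  volume {y : ℝ | (x, y) ∈ E}

/-- The two-dimensional decreasing rearrangement `E*` of a set `E ⊆ ℝ²`. -/
def starSet (E : Set (ℝ × ℝ)) : Set (ℝ × ℝ) :=
  {p | 0 < p.1 ∧ 0 < p.2 ∧ ENNReal.ofReal p.2 < decRe volume (phiSec E) p.1}

/-- The two-dimensional decreasing rearrangement `f₂*` of a function (layer-cake formula). -/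
noncomputable def rearr2 (f : ℝ × ℝ → ℝ) (x : ℝ × ℝ) : ℝ≥0∞ :=
  ∫⁻ t in Set.Ioi (0 : ℝ), (starSet {p | t < |f p|}).indicator (fun _ => (1 : ℝ≥0∞)) x

/-- The open positive quadrant `ℝ₊²`. -/
def Quad : Set (ℝ × ℝ) := Set.Ioi 0 ×ˢ Set.Ioi 0

lemma meas_liminf_le {α : Type*} [MeasurableSpace α] (μ : Measure α) (A : ℕ → Set α) :
    μ (⋃ N, ⋂ n, ⋂ _ : N ≤ n, A n) ≤ liminf (fun n => μ (A n)) atTop := by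
  rw [liminf_eq_iSup_iInf_of_nat]
  have hmono : Monotone (fun N => ⋂ n, ⋂ _ : N ≤ n, A n) := by
    intro a b hab
    exact biInter_subset_biInter_left (fun n hn => hab.trans hn)
  rw [hmono.measure_iUnion]
  refine iSup_mono fun N => le_iInf₂ fun n hn => measure_mono ?_
  exact biInter_subset_of_mem hn

lemma decRe_mono {α : Type*} [MeasurableSpace α] (μ : Measure α) {g g' : α → ℝ≥0∞}
    (h : ∀ l, μ {x | l < g x} ≤ μ {x | l < g' x}) (t : ℝ) : decRe μ g t ≤ decRe μ g' t :=
  sInf_le_sInf fun l hl => le_trans (h l) hl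

lemma decRe_fatou {α : Type*} [MeasurableSpace α] (μ : Measure α) {g : α → ℝ≥0∞}
    {gn : ℕ → α → ℝ≥0∞}
    (h : ∀ l, μ {x | l < g x} ≤ liminf (fun n => μ {x | l < gn n x}) atTop) (t : ℝ) :
    decRe μ g t ≤ liminf (fun n => decRe μ (gn n) t) atTop := by
  by_contra hc
  push_neg at hc
  obtain ⟨l, hl1, hl2⟩ := exists_between hc
  have hfreq : ∃ᶠ n in atTop, decRe μ (gn n) t < l :=
    frequently_lt_of_liminf_lt (by isBoundedDefault) hl1
  have hfreq2 : ∃ᶠ n in atTop, μ {x | l < gn n x} ≤ ENNReal.ofReal t := by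
    refine hfreq.mono fun n hn => ?_
    obtain ⟨l', hl', hl'l⟩ := sInf_lt_iff.1 hn
    exact le_trans (measure_mono fun x hx => lt_trans hl'l hx) hl'
  have hle : μ {x | l < g x} ≤ ENNReal.ofReal t :=
    le_trans (h l) (liminf_le_of_frequently_le' hfreq2)
  have : decRe μ g t ≤ l := sInf_le hle
  exact hl2.not_ge this

lemma decRe_phiSec_mono {E F : Set (ℝ × ℝ)} (hEF : E ⊆ F) (s : ℝ) :
    decRe volume (phiSec E) s ≤ decRe volume (phiSec F) s := by
  refine decRe_mono _ (fun l => measure_mono fun x hx => ?_) s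
  simp only [Set.mem_setOf_eq] at hx ⊢
  unfold phiSec at hx ⊢
  exact lt_of_lt_of_le hx (measure_mono fun y hy => hEF hy)

lemma starSet_mono {E F : Set (ℝ × ℝ)} (hEF : E ⊆ F) : starSet E ⊆ starSet F :=
  fun p hp => ⟨hp.1, hp.2.1, lt_of_lt_of_le hp.2.2 (decRe_phiSec_mono hEF p.1)⟩

lemma rearr2_mono {f g : ℝ × ℝ → ℝ} (hle : ∀ p, |f p| ≤ |g p|) (x : ℝ × ℝ) :
    rearr2 f x ≤ rearr2 g x := by
  refine lintegral_mono fun t => ?_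
  exact Set.indicator_le_indicator_of_subset
    (starSet_mono fun p hp => lt_of_lt_of_le hp (hle p)) (fun _ => zero_le) x

lemma indicator_t_measurable (g : ℝ × ℝ → ℝ) (x : ℝ × ℝ) :
    Measurable (fun t : ℝ => (starSet {p | t < |g p|}).indicator (fun _ => (1 : ℝ≥0∞)) x) := by
  have heq : (fun t : ℝ => (starSet {p | t < |g p|}).indicator (fun _ => (1 : ℝ≥0∞)) x)
      = Set.indicator {t : ℝ | x ∈ starSet {p | t < |g p|}} (fun _ => (1 : ℝ≥0∞)) := by
    funext t
    classical
    rw [Set.indicator_apply, Set.indicator_apply]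
    simp only [Set.mem_setOf_eq]
  rw [heq]
  refine (measurable_const.indicator ?_)
  have hD : Antitone (fun t : ℝ => decRe volume (phiSec {p | t < |g p|}) x.1) := by
    intro a b hab
    exact decRe_phiSec_mono (fun p hp => lt_of_le_of_lt hab hp) x.1
  by_cases hx : 0 < x.1 ∧ 0 < x.2
  · have : {t : ℝ | x ∈ starSet {p | t < |g p|}}
        = (fun t : ℝ => decRe volume (phiSec {p | t < |g p|}) x.1) ⁻¹' Ioi (ENNReal.ofReal x.2) := by
      ext t
      simp [starSet, hx.1, hx.2, Set.mem_preimage]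
    rw [this]
    exact hD.measurable measurableSet_Ioi
  · have : {t : ℝ | x ∈ starSet {p | t < |g p|}} = (∅ : Set ℝ) := by
      ext t
      simp only [starSet, mem_setOf_eq, mem_empty_iff_false, iff_false]
      intro hmem
      exact hx ⟨hmem.1, hmem.2.1⟩
    rw [this]
    exact MeasurableSet.empty

/-- The key per-level Fatou lemma for the rearrangement. -/
lemma key_decRe (f : ℝ × ℝ → ℝ) (fn : ℕ → ℝ × ℝ → ℝ)
    (h : ∀ᵐ x ∂(volume : Measure (ℝ × ℝ)),
      ENNReal.ofReal |f x| ≤ Filter.liminf (fun n => ENNReal.ofReal |fn n x|) Filter.atTop)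
    {t : ℝ} (ht : 0 < t) (s : ℝ) :
    decRe volume (phiSec {p | t < |f p|}) s
      ≤ liminf (fun n => decRe volume (phiSec {p | t < |fn n p|}) s) atTop := by
  set E : Set (ℝ × ℝ) := {p | t < |f p|} with hE
  set A : ℕ → Set (ℝ × ℝ) := fun n => {p | t < |fn n p|} with hA
  set L : Set (ℝ × ℝ) := ⋃ N, ⋂ n, ⋂ _ : N ≤ n, A n with hL
  -- E ⊆ L up to null
  have hincl : ∀ᵐ p ∂(volume : Measure (ℝ × ℝ)), p ∈ E → p ∈ L := by
    refine h.mono fun p hp hpE => ?_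
    have h1 : ENNReal.ofReal t < ENNReal.ofReal |f p| :=
      (ENNReal.ofReal_lt_ofReal_iff (lt_of_le_of_lt ht.le hpE |>.trans_le le_rfl)).2 hpE
    have h2 : ENNReal.ofReal t < liminf (fun n => ENNReal.ofReal |fn n p|) atTop :=
      lt_of_lt_of_le h1 hp
    have h3 : ∀ᶠ n in atTop, ENNReal.ofReal t < ENNReal.ofReal |fn n p| :=
      eventually_lt_of_lt_liminf h2
    obtain ⟨N, hN⟩ := eventually_atTop.1 h3
    refine mem_iUnion.2 ⟨N, ?_⟩
    refine mem_iInter.2 fun n => mem_iInter.2 fun hn => ?_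
    exact (ENNReal.ofReal_lt_ofReal_iff_of_nonneg ht.le).1 (hN n hn)
  have hnull : (volume : Measure (ℝ × ℝ)) (E \ L) = 0 := by
    rw [measure_eq_zero_iff_ae_notMem]
    exact hincl.mono fun p hp hmem => hmem.2 (hp hmem.1)
  -- a.e. sections of E \ L are null
  have hnull' : ((volume : Measure ℝ).prod (volume : Measure ℝ)) (E \ L) = 0 := by
    rw [← MeasureTheory.Measure.volume_eq_prod]; exact hnull
  have hsec := MeasureTheory.Measure.measure_ae_null_of_prod_null hnull'
  -- a.e. pointwise Fatou for phiSec
  have hptw : ∀ᵐ x ∂(volume : Measure ℝ),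
      phiSec E x ≤ liminf (fun n => phiSec (A n) x) atTop := by
    refine hsec.mono fun x hx => ?_
    have hx0 : (volume : Measure ℝ) (Prod.mk x ⁻¹' (E \ L)) = 0 := hx
    have hsub : {y : ℝ | (x, y) ∈ E}
        ⊆ {y : ℝ | (x, y) ∈ L} ∪ Prod.mk x ⁻¹' (E \ L) := by
      intro y hy
      by_cases hyL : (x, y) ∈ L
      · exact Or.inl hyL
      · exact Or.inr ⟨hy, hyL⟩
    have h1 : phiSec E x ≤ volume {y : ℝ | (x, y) ∈ L} := by
      calc phiSec E x ≤ volume ({y : ℝ | (x, y) ∈ L} ∪ Prod.mk x ⁻¹' (E \ L)) :=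
            measure_mono hsub
        _ ≤ volume {y : ℝ | (x, y) ∈ L} + volume (Prod.mk x ⁻¹' (E \ L)) := measure_union_le _ _
        _ = volume {y : ℝ | (x, y) ∈ L} := by rw [hx0, add_zero]
    have hLsec : {y : ℝ | (x, y) ∈ L}
        = ⋃ N, ⋂ n, ⋂ _ : N ≤ n, {y : ℝ | (x, y) ∈ A n} := by
      ext y; simp [hL, mem_iUnion, mem_iInter]
    calc phiSec E x ≤ volume {y : ℝ | (x, y) ∈ L} := h1
      _ ≤ liminf (fun n => phiSec (A n) x) atTop := by
          rw [hLsec]; exact meas_liminf_le _ _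
  -- distribution function Fatou
  refine decRe_fatou _ (fun l => ?_) s
  have hsub2 : ∀ᵐ x ∂(volume : Measure ℝ), x ∈ {x | l < phiSec E x} →
      x ∈ ⋃ N, ⋂ n, ⋂ _ : N ≤ n, {x | l < phiSec (A n) x} := by
    refine hptw.mono fun x hx hmem => ?_
    have : l < liminf (fun n => phiSec (A n) x) atTop := lt_of_lt_of_le hmem hx
    obtain ⟨N, hN⟩ := eventually_atTop.1 (eventually_lt_of_lt_liminf this)
    exact mem_iUnion.2 ⟨N, mem_iInter.2 fun n => mem_iInter.2 fun hn => hN n hn⟩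
  calc (volume : Measure ℝ) {x | l < phiSec E x}
      ≤ volume (⋃ N, ⋂ n, ⋂ _ : N ≤ n, {x | l < phiSec (A n) x}) := measure_mono_ae hsub2
    _ ≤ liminf (fun n => volume {x | l < phiSec (A n) x}) atTop := meas_liminf_le _ _

theorem stmt10 (f : ℝ × ℝ → ℝ) (fn : ℕ → ℝ × ℝ → ℝ)
    (hf : Measurable f) (hfn : ∀ n, Measurable (fn n))
    (h : ∀ᵐ x ∂(volume : Measure (ℝ × ℝ)),
      ENNReal.ofReal |f x| ≤ Filter.liminf (fun n => ENNReal.ofReal |fn n x|) Filter.atTop) :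
    (∀ x ∈ Quad,
        rearr2 f x ≤ Filter.liminf (fun n => rearr2 (fn n) x) Filter.atTop) ∧
      ((∀ x, Monotone fun n => |fn n x|) →
        (∀ x, Filter.Tendsto (fun n => ENNReal.ofReal |fn n x|) Filter.atTop
          (nhds (ENNReal.ofReal |f x|))) →
        ∀ x ∈ Quad, Monotone (fun n => rearr2 (fn n) x) ∧
          Filter.Tendsto (fun n => rearr2 (fn n) x) Filter.atTop (nhds (rearr2 f x))) := by
  have part1 : ∀ x ∈ Quad, rearr2 f x ≤ liminf (fun n => rearr2 (fn n) x) atTop := by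
    intro x hx
    have hx1 : 0 < x.1 := hx.1
    have hx2 : 0 < x.2 := hx.2
    have step : ∀ t ∈ Ioi (0:ℝ),
        (starSet {p | t < |f p|}).indicator (fun _ => (1:ℝ≥0∞)) x
          ≤ liminf (fun n =>
            (starSet {p | t < |fn n p|}).indicator (fun _ => (1:ℝ≥0∞)) x) atTop := by
      intro t ht
      by_cases hmem : x ∈ starSet {p | t < |f p|}
      · rw [Set.indicator_of_mem hmem]
        have h1 : ENNReal.ofReal x.2 < decRe volume (phiSec {p | t < |f p|}) x.1 := hmem.2.2
        have h2 := key_decRe f fn h ht x.1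
        have h3 : ∀ᶠ n in atTop,
            ENNReal.ofReal x.2 < decRe volume (phiSec {p | t < |fn n p|}) x.1 :=
          eventually_lt_of_lt_liminf (lt_of_lt_of_le h1 h2)
        refine le_liminf_of_le (by isBoundedDefault) ?_
        refine h3.mono fun n hn => ?_
        rw [Set.indicator_of_mem (show x ∈ starSet {p | t < |fn n p|} from ⟨hx1, hx2, hn⟩)]
      · rw [Set.indicator_of_notMem hmem]
        exact zero_le
    calc rearr2 f x
        ≤ ∫⁻ t in Ioi (0:ℝ), liminf (fun n =>
            (starSet {p | t < |fn n p|}).indicator (fun _ => (1:ℝ≥0∞)) x) atTop := by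
          refine lintegral_mono_ae ?_
          exact (ae_restrict_iff' measurableSet_Ioi).2 (ae_of_all _ step)
      _ ≤ liminf (fun n => rearr2 (fn n) x) atTop :=
          lintegral_liminf_le fun n => indicator_t_measurable (fn n) x
  refine ⟨part1, fun hMono hTend x hx => ?_⟩
  have hle : ∀ n p, |fn n p| ≤ |f p| := by
    intro n p
    have hm : Monotone fun k => ENNReal.ofReal |fn k p| :=
      fun a b hab => ENNReal.ofReal_le_ofReal (hMono p hab)
    have h4 := hm.ge_of_tendsto (hTend p) n
    exact (ENNReal.ofReal_le_ofReal_iff (abs_nonneg _)).1 h4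
  have hmono2 : Monotone (fun n => rearr2 (fn n) x) :=
    fun a b hab => rearr2_mono (fun p => hMono p hab) x
  refine ⟨hmono2, ?_⟩
  have hT : Tendsto (fun n => rearr2 (fn n) x) atTop (nhds (⨆ n, rearr2 (fn n) x)) :=
    tendsto_atTop_iSup hmono2
  have heq : (⨆ n, rearr2 (fn n) x) = rearr2 f x := by
    refine le_antisymm (iSup_le fun n => rearr2_mono (hle n) x) ?_
    calc rearr2 f x ≤ liminf (fun n => rearr2 (fn n) x) atTop := part1 x hx
      _ = ⨆ n, rearr2 (fn n) x := hT.liminf_eq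
  rwa [heq] at hT
end

section
/- For any measurable function f on ℝ², the two-dimensional decreasing rearrangement equals the iterated (multivariate) rearrangement: f₂*(s,t) = (R_t)^{*x}(s), where R_t(x) = (f_x)^{*y}(t) is the decreasing rearrangement in y of f_x(y) = f(x,y), and then one takes the decreasing rearrangement in x. -/
open MeasureTheory Set ENNReal Filter

/-- The distribution function at the rearrangement value is at most the level. -/
lemma decRe_mem {α : Type*} [MeasurableSpace α] (μ : Measure α)
    (g : α → ℝ≥0∞) (s : ℝ) :
    μ {x | decRe μ g s < g x} ≤ ENNReal.ofReal s := by
  set S : Set ℝ≥0∞ := {l : ℝ≥0∞ | μ {x | l < g x} ≤ ENNReal.ofReal s} with hS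
  by_cases hne : S.Nonempty
  · obtain ⟨u, hu_anti, hu_tendsto, hu_mem⟩ := exists_seq_tendsto_sInf hne (OrderBot.bddBelow S)
    have hset : {x | decRe μ g s < g x} = ⋃ n, {x | u n < g x} := by
      ext x
      simp only [mem_setOf_eq, mem_iUnion]
      constructor
      · intro h
        have : ∀ᶠ n in atTop, u n < g x := hu_tendsto.eventually_lt_const h
        exact this.exists
      · rintro ⟨n, hn⟩
        exact lt_of_le_of_lt (sInf_le (hu_mem n)) hn
    rw [hset]
    have hdir : Directed (· ⊆ ·) fun n => {x | u n < g x} := by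
      refine Monotone.directed_le fun n m hnm x hx => lt_of_le_of_lt (hu_anti hnm) hx
    rw [hdir.measure_iUnion]
    exact iSup_le fun n => hu_mem n
  · have hSe : S = ∅ := not_nonempty_iff_eq_empty.mp hne
    have : decRe μ g s = ⊤ := by
      rw [decRe, ← hS, hSe, sInf_empty]
    rw [this]
    simp

/-- Key characterization: `a < f*(s)` iff the distribution function at `a` exceeds `s`. -/
lemma lt_decRe_iff {α : Type*} [MeasurableSpace α] (μ : Measure α)
    (g : α → ℝ≥0∞) (s : ℝ) (a : ℝ≥0∞) :
    a < decRe μ g s ↔ ENNReal.ofReal s < μ {x | a < g x} := by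
  have hmem := decRe_mem μ g s
  rw [decRe]
  constructor
  · intro h
    by_contra hle
    push_neg at hle
    exact absurd (sInf_le (show a ∈ {l : ℝ≥0∞ | μ {x | l < g x} ≤ ENNReal.ofReal s} from hle)) (not_le.mpr h)
  · intro h
    refine not_le.mp fun hle => ?_
    rw [← decRe] at hle
    have hsub : {x | a < g x} ⊆ {x | decRe μ g s < g x} :=
      fun x hx => lt_of_le_of_lt hle hx
    exact absurd ((measure_mono hsub).trans hmem) (not_le.mpr h)

theorem stmt16 (f : ℝ × ℝ → ℝ) (hf : Measurable f) :
    ∀ s t : ℝ, 0 < s → 0 < t →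
      rearr2 f (s, t)
        = decRe volume
            (fun x => decRe volume (fun y => ENNReal.ofReal |f (x, y)|) t) s := by
  intro s t hs ht
  set A : ℝ≥0∞ :=
    decRe volume (fun x => decRe volume (fun y => ENNReal.ofReal |f (x, y)|) t) s with hA
  set T : Set ℝ := {t' : ℝ | ENNReal.ofReal t' < A} with hT
  have hTmeas : MeasurableSet T :=
    measurableSet_lt ENNReal.measurable_ofReal measurable_const
  have key : ∀ t' ∈ Set.Ioi (0 : ℝ),
      (starSet {p | t' < |f p|}).indicator (fun _ => (1 : ℝ≥0∞)) (s, t)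
        = T.indicator (fun _ => (1 : ℝ≥0∞)) t' := by
    intro t' ht'
    have hiff : (s, t) ∈ starSet {p | t' < |f p|} ↔ t' ∈ T := by
      rw [starSet]
      simp only [mem_setOf_eq]
      rw [and_iff_right hs, and_iff_right ht]
      rw [lt_decRe_iff]
      have hsec : ∀ x : ℝ, phiSec {p | t' < |f p|} x
          = volume {y : ℝ | ENNReal.ofReal t' < ENNReal.ofReal |f (x, y)|} := by
        intro x
        rw [phiSec]
        congr 1
        ext y
        simp only [mem_setOf_eq]
        exact (ENNReal.ofReal_lt_ofReal_iff_of_nonneg (le_of_lt ht')).symm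
      have hxset : {x : ℝ | ENNReal.ofReal t < phiSec {p | t' < |f p|} x}
          = {x : ℝ | ENNReal.ofReal t'
              < decRe volume (fun y => ENNReal.ofReal |f (x, y)|) t} := by
        ext x
        simp only [mem_setOf_eq, hsec x]
        exact (lt_decRe_iff volume (fun y => ENNReal.ofReal |f (x, y)|) t
          (ENNReal.ofReal t')).symm
      rw [hxset, hT, mem_setOf_eq, hA, lt_decRe_iff]
    by_cases h : (s, t) ∈ starSet {p | t' < |f p|}
    · rw [Set.indicator_of_mem h, Set.indicator_of_mem (hiff.mp h)]
    · rw [Set.indicator_of_notMem h, Set.indicator_of_notMem (fun hc => h (hiff.mpr hc))]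
  have step1 : rearr2 f (s, t)
      = ∫⁻ t' in Set.Ioi (0 : ℝ), T.indicator (fun _ => (1 : ℝ≥0∞)) t' := by
    rw [rearr2]
    exact setLIntegral_congr_fun measurableSet_Ioi key
  rw [step1, lintegral_indicator hTmeas]
  simp only [lintegral_one, Measure.restrict_restrict hTmeas, Measure.restrict_apply MeasurableSet.univ,
    Set.univ_inter]
  by_cases hAtop : A = ⊤
  · have : T ∩ Set.Ioi (0 : ℝ) = Set.Ioi (0 : ℝ) := by
      rw [hT, hAtop]
      ext x
      simp [ENNReal.ofReal_lt_top]
    rw [this, hAtop]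
    simp [Real.volume_Ioi]
  · have : T ∩ Set.Ioi (0 : ℝ) = Set.Ioo (0 : ℝ) A.toReal := by
      ext x
      simp only [hT, mem_inter_iff, mem_setOf_eq, mem_Ioi, mem_Ioo]
      constructor
      · rintro ⟨h1, h2⟩
        exact ⟨h2, (ENNReal.ofReal_lt_iff_lt_toReal (le_of_lt h2) hAtop).mp h1⟩
      · rintro ⟨h1, h2⟩
        exact ⟨(ENNReal.ofReal_lt_iff_lt_toReal (le_of_lt h1) hAtop).mpr h2, h1⟩
    rw [this, Real.volume_Ioo, sub_zero, ENNReal.ofReal_toReal hAtop]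
end
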